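/- Let ρ > 0 and, for j = 1, 2, let ξⱼ : ℝ → ℝ be Lipschitz with constant Lⱼ such that ρ ≤ 1 + ξⱼ′(σ) for almost every σ ∈ ℝ; set xⱼ(s) = s + ξⱼ(s) with inverse sⱼ(·) and ηⱼ(y) = sⱼ(y) − y. Then: (i) ρ·|η₁(y) − η₂(y)| ≤ (1/2)|ξ₁(s₁(y)) − ξ₂(s₁(y))| + (1/2)|ξ₁(s₂(y)) − ξ₂(s₂(y))| for every y; in particular (ii) sup_y |η₁(y) − η₂(y)| ≤ ρ⁻¹ sup_σ |ξ₁(σ) − ξ₂(σ)|, and (iii) ρ·(∫ (η₁ − η₂)² dy)^{1/2} ≤ ((1 + L₁)^{1/2} + (1 + L₂)^{1/2})·(∫ (ξ₁ − ξ₂)² dσ)^{1/2}. -/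

import Mathlib

open MeasureTheory
open Set


lemma aux_deriv_le {ξ : ℝ → ℝ} {L : ℝ} (hlip : ∀ a b : ℝ, |ξ a - ξ b| ≤ L * |a - b|)
    {d σ : ℝ} (h : HasDerivAt ξ d σ) : |d| ≤ L := by
  rw [hasDerivAt_iff_tendsto_slope] at h
  refine le_of_tendsto h.abs ?_
  filter_upwards [self_mem_nhdsWithin] with y (hy : y ≠ σ)
  have hyσ : y - σ ≠ 0 := sub_ne_zero.2 hy
  rw [slope_def_field, abs_div, div_le_iff₀ (abs_pos.2 hyσ)]
  exact hlip y σ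

lemma aux_goodset {ρ L : ℝ} {ξ ξ' : ℝ → ℝ} (hρ : 0 < ρ)
    (hlip : ∀ a b : ℝ, |ξ a - ξ b| ≤ L * |a - b|)
    (hderiv : ∀ᵐ σ ∂volume, HasDerivAt ξ (ξ' σ) σ)
    (hlow : ∀ᵐ σ ∂volume, ρ ≤ 1 + ξ' σ) :
    ∃ D : Set ℝ, MeasurableSet D ∧ volume Dᶜ = 0 ∧
      ∀ σ ∈ D, HasDerivAt (fun t => t + ξ t) (1 + ξ' σ) σ ∧ ρ ≤ 1 + ξ' σ ∧ 1 + ξ' σ ≤ 1 + L := by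
  have hae : ∀ᵐ σ ∂volume, HasDerivAt ξ (ξ' σ) σ ∧ ρ ≤ 1 + ξ' σ := hderiv.and hlow
  rw [MeasureTheory.ae_iff] at hae
  obtain ⟨t, hsub, htm, ht0⟩ := exists_measurable_superset_of_null hae
  refine ⟨tᶜ, htm.compl, by simpa using ht0, fun σ hσ => ?_⟩
  have hP : HasDerivAt ξ (ξ' σ) σ ∧ ρ ≤ 1 + ξ' σ := by
    by_contra hc
    exact hσ (hsub hc)
  refine ⟨(hasDerivAt_id σ).add hP.1, hP.2, ?_⟩
  have := aux_deriv_le hlip hP.1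
  have := abs_le.1 this
  linarith [this.2]


lemma aux_cont {ξ : ℝ → ℝ} {L : ℝ} (hL : 0 ≤ L)
    (hlip : ∀ a b : ℝ, |ξ a - ξ b| ≤ L * |a - b|) : Continuous ξ := by
  have : LipschitzWith ⟨L, hL⟩ ξ := by
    apply LipschitzWith.of_dist_le_mul
    intro a b
    rw [Real.dist_eq, Real.dist_eq]
    exact hlip a b
  exact this.continuous

lemma aux_mono {ρ L : ℝ} {ξ ξ' s : ℝ → ℝ} (hρ : 0 < ρ) (hL : 0 ≤ L)
    (hlip : ∀ a b : ℝ, |ξ a - ξ b| ≤ L * |a - b|)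
    (hinv : ∀ σ, s (σ + ξ σ) = σ)
    {D : Set ℝ} (hD0 : volume Dᶜ = 0)
    (hD : ∀ σ ∈ D, HasDerivAt (fun t => t + ξ t) (1 + ξ' σ) σ ∧ ρ ≤ 1 + ξ' σ ∧ 1 + ξ' σ ≤ 1 + L) :
    StrictMono (fun σ => σ + ξ σ) := by
  set x : ℝ → ℝ := fun σ => σ + ξ σ with hx
  have hcx : Continuous x := continuous_id.add (aux_cont hL hlip)
  have hinj : Function.Injective x := by
    have : Function.LeftInverse s x := hinv
    exact this.injective
  rcases hcx.strictMono_of_inj hinj with h | h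
  · exact h
  · exfalso
    have hDne : D.Nonempty := by
      rcases D.eq_empty_or_nonempty with rfl | hne
      · rw [Set.compl_empty] at hD0
        simpa [Real.volume_univ] using hD0
      · exact hne
    obtain ⟨σ₀, hσ₀⟩ := hDne
    obtain ⟨hd, hlow, -⟩ := hD σ₀ hσ₀
    rw [hasDerivAt_iff_tendsto_slope] at hd
    have hle : 1 + ξ' σ₀ ≤ 0 := by
      refine le_of_tendsto hd ?_
      filter_upwards [self_mem_nhdsWithin] with y (hy : y ≠ σ₀)
      rw [slope_def_field]
      rcases lt_or_gt_of_ne hy with hlt | hgt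
      · apply div_nonpos_of_nonneg_of_nonpos
        · have := h hlt
          linarith
        · linarith
      · apply div_nonpos_of_nonpos_of_nonneg
        · have := h hgt
          linarith
        · linarith
    linarith


lemma aux_lintegral_image {s : Set ℝ} {f f' : ℝ → ℝ} (hs : MeasurableSet s)
    (hf' : ∀ x ∈ s, HasDerivWithinAt f (f' x) s x) (hf : Set.InjOn f s) (g : ℝ → ENNReal) :
    ∫⁻ x in f '' s, g x = ∫⁻ x in s, ENNReal.ofReal |f' x| * g (f x) := by
  simpa only [ContinuousLinearMap.det_toSpanSingleton] using
    lintegral_image_eq_lintegral_abs_det_fderiv_mul volume hs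
      (fun x hx => (hf' x hx).hasFDerivWithinAt) hf g

lemma aux_expand {ρ L : ℝ} {ξ ξ' : ℝ → ℝ} (hρ : 0 < ρ)
    (hmono : StrictMono (fun σ => σ + ξ σ))
    {D : Set ℝ} (hDm : MeasurableSet D) (hD0 : volume Dᶜ = 0)
    (hD : ∀ σ ∈ D, HasDerivAt (fun t => t + ξ t) (1 + ξ' σ) σ ∧ ρ ≤ 1 + ξ' σ ∧ 1 + ξ' σ ≤ 1 + L) :
    ∀ a b : ℝ, ρ * |a - b| ≤ |(a + ξ a) - (b + ξ b)| := by
  set x : ℝ → ℝ := fun σ => σ + ξ σ with hx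
  have key : ∀ a b : ℝ, a ≤ b → ρ * (b - a) ≤ x b - x a := by
    intro a b hab
    set s' : Set ℝ := D ∩ Icc a b with hs'
    have hs'm : MeasurableSet s' := hDm.inter measurableSet_Icc
    have hf' : ∀ σ ∈ s', HasDerivWithinAt x (1 + ξ' σ) s' σ :=
      fun σ hσ => ((hD σ hσ.1).1).hasDerivWithinAt
    have hcov := aux_lintegral_image hs'm hf' (hmono.injective.injOn) 1
    simp only [Pi.one_apply, mul_one, setLIntegral_one] at hcov
    have hvol_s' : volume s' = ENNReal.ofReal (b - a) := by
      have h2 : s' = Icc a b \ Dᶜ := by rw [diff_eq, compl_compl, inter_comm]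
      rw [h2, measure_diff_null hD0, Real.volume_Icc]
    have hlow : ENNReal.ofReal ρ * ENNReal.ofReal (b - a) ≤ volume (x '' s') := by
      rw [hcov, ← hvol_s', ← setLIntegral_const s' (ENNReal.ofReal ρ)]
      apply setLIntegral_mono' hs'm
      intro σ hσ
      rw [abs_of_pos (lt_of_lt_of_le hρ (hD σ hσ.1).2.1)]
      exact ENNReal.ofReal_le_ofReal (hD σ hσ.1).2.1
    have hup : volume (x '' s') ≤ ENNReal.ofReal (x b - x a) := by
      rw [← Real.volume_Icc]
      apply measure_mono
      rintro - ⟨σ, hσ, rfl⟩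
      exact ⟨hmono.monotone hσ.2.1, hmono.monotone hσ.2.2⟩
    have := le_trans hlow hup
    rw [← ENNReal.ofReal_mul hρ.le] at this
    have hba : (0:ℝ) ≤ x b - x a := sub_nonneg.2 (hmono.monotone hab)
    exact (ENNReal.ofReal_le_ofReal_iff hba).1 this
  intro a b
  rcases le_total a b with hab | hab
  · have := key a b hab
    rw [abs_sub_comm a b, abs_of_nonneg (sub_nonneg.2 hab),
      abs_sub_comm, abs_of_nonneg (sub_nonneg.2 (hmono.monotone hab))]
    simpa using this
  · have := key b a hab
    rw [abs_of_nonneg (sub_nonneg.2 hab), abs_of_nonneg (sub_nonneg.2 (hmono.monotone hab))]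
    simpa using this


lemma aux_image_null {ξ : ℝ → ℝ} {L : ℝ} (hL : 0 ≤ L)
    (hlip : ∀ a b : ℝ, |ξ a - ξ b| ≤ L * |a - b|)
    {E : Set ℝ} (hE : volume E = 0) : volume ((fun σ => σ + ξ σ) '' E) = 0 := by
  have hx : LipschitzWith (⟨1 + L, by linarith⟩) (fun σ => σ + ξ σ) := by
    apply LipschitzWith.of_dist_le_mul
    intro a b
    simp only [Real.dist_eq, NNReal.coe_mk]
    have h := hlip a b
    have he : a + ξ a - (b + ξ b) = (a - b) + (ξ a - ξ b) := by ring
    calc |a + ξ a - (b + ξ b)| ≤ |a - b| + |ξ a - ξ b| := by rw [he]; exact abs_add_le _ _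
      _ ≤ |a - b| + L * |a - b| := by linarith
      _ = (1 + L) * |a - b| := by ring
  have h := hx.hausdorffMeasure_image_le zero_le_one E
  rw [MeasureTheory.hausdorffMeasure_real] at h
  refine le_antisymm ?_ zero_le
  calc volume ((fun σ => σ + ξ σ) '' E) ≤ _ * volume E := h
    _ = 0 := by rw [hE, mul_zero]

lemma aux_cov {ρ L : ℝ} {ξ ξ' s : ℝ → ℝ} (hρ : 0 < ρ) (hL : 0 ≤ L)
    (hlip : ∀ a b : ℝ, |ξ a - ξ b| ≤ L * |a - b|)
    (hinv : ∀ σ, s (σ + ξ σ) = σ) (hinv' : ∀ y, s y + ξ (s y) = y)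
    {D : Set ℝ} (hDm : MeasurableSet D) (hD0 : volume Dᶜ = 0)
    (hD : ∀ σ ∈ D, HasDerivAt (fun t => t + ξ t) (1 + ξ' σ) σ ∧ ρ ≤ 1 + ξ' σ ∧ 1 + ξ' σ ≤ 1 + L)
    (F : ℝ → ENNReal) :
    (∫⁻ y, F (s y)) ≤ ENNReal.ofReal (1 + L) * ∫⁻ σ, F σ ∧
    ENNReal.ofReal ρ * (∫⁻ σ, F σ) ≤ ∫⁻ y, F (s y) := by
  set x : ℝ → ℝ := fun σ => σ + ξ σ with hxdef
  have hmono : StrictMono x := aux_mono hρ hL hlip hinv hD0 hD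
  have hf' : ∀ σ ∈ D, HasDerivWithinAt x (1 + ξ' σ) D σ :=
    fun σ hσ => ((hD σ hσ).1).hasDerivWithinAt
  have hkey : ∫⁻ y in x '' D, F (s y) = ∫⁻ σ in D, ENNReal.ofReal (1 + ξ' σ) * F σ := by
    rw [aux_lintegral_image hDm hf' hmono.injective.injOn (fun y => F (s y))]
    apply setLIntegral_congr_fun hDm
    intro σ hσ
    dsimp only
    rw [hinv σ, abs_of_pos (lt_of_lt_of_le hρ (hD σ hσ).2.1)]
  have hnull : volume (x '' D)ᶜ = 0 := by
    refine measure_mono_null ?_ (aux_image_null hL hlip hD0)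
    intro y hy
    have hxy : x (s y) = y := hinv' y
    exact ⟨s y, fun hmem => hy ⟨s y, hmem, hxy⟩, hxy⟩
  have hfull : ∫⁻ y, F (s y) = ∫⁻ y in x '' D, F (s y) := by
    rw [← setLIntegral_univ (μ := volume) (fun y => F (s y))]
    exact (setLIntegral_congr (ae_eq_univ.2 hnull)).symm
  have hfullD : ∫⁻ σ, F σ = ∫⁻ σ in D, F σ := by
    rw [← setLIntegral_univ (μ := volume) F]
    exact (setLIntegral_congr (ae_eq_univ.2 hD0)).symm
  constructor
  · calc ∫⁻ y, F (s y) = ∫⁻ σ in D, ENNReal.ofReal (1 + ξ' σ) * F σ := by rw [hfull, hkey]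
      _ ≤ ∫⁻ σ in D, ENNReal.ofReal (1 + L) * F σ := by
          refine setLIntegral_mono' hDm fun σ hσ => ?_
          exact mul_le_mul_left (ENNReal.ofReal_le_ofReal (hD σ hσ).2.2) _
      _ = ENNReal.ofReal (1 + L) * ∫⁻ σ in D, F σ :=
          lintegral_const_mul' _ _ ENNReal.ofReal_ne_top
      _ = ENNReal.ofReal (1 + L) * ∫⁻ σ, F σ := by rw [← hfullD]
  · calc ENNReal.ofReal ρ * ∫⁻ σ, F σ = ENNReal.ofReal ρ * ∫⁻ σ in D, F σ := by rw [← hfullD]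
      _ = ∫⁻ σ in D, ENNReal.ofReal ρ * F σ :=
          (lintegral_const_mul' _ _ ENNReal.ofReal_ne_top).symm
      _ ≤ ∫⁻ σ in D, ENNReal.ofReal (1 + ξ' σ) * F σ := by
          refine setLIntegral_mono' hDm fun σ hσ => ?_
          exact mul_le_mul_left (ENNReal.ofReal_le_ofReal (hD σ hσ).2.1) _
      _ = ∫⁻ y in x '' D, F (s y) := hkey.symm
      _ ≤ ∫⁻ y, F (s y) := by rw [hfull]

/-- Continuity estimates for the inverse displacement map `ξ ↦ η = Sξ`:
pointwise, sup-norm, and `L²` bounds for the difference of two inverse displacements. -/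
theorem stmt_6 (ρ L₁ L₂ : ℝ) (hρ : 0 < ρ) (hL₁ : 0 ≤ L₁) (hL₂ : 0 ≤ L₂)
    (ξ₁ ξ₂ ξ₁' ξ₂' : ℝ → ℝ)
    (hlip₁ : ∀ a b : ℝ, |ξ₁ a - ξ₁ b| ≤ L₁ * |a - b|)
    (hlip₂ : ∀ a b : ℝ, |ξ₂ a - ξ₂ b| ≤ L₂ * |a - b|)
    (hderiv₁ : ∀ᵐ σ ∂volume, HasDerivAt ξ₁ (ξ₁' σ) σ)
    (hderiv₂ : ∀ᵐ σ ∂volume, HasDerivAt ξ₂ (ξ₂' σ) σ)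
    (hlow₁ : ∀ᵐ σ ∂volume, ρ ≤ 1 + ξ₁' σ)
    (hlow₂ : ∀ᵐ σ ∂volume, ρ ≤ 1 + ξ₂' σ)
    (s₁ s₂ : ℝ → ℝ)
    (hinv₁ : ∀ σ, s₁ (σ + ξ₁ σ) = σ) (hinv₁' : ∀ y, s₁ y + ξ₁ (s₁ y) = y)
    (hinv₂ : ∀ σ, s₂ (σ + ξ₂ σ) = σ) (hinv₂' : ∀ y, s₂ y + ξ₂ (s₂ y) = y)
    (η₁ η₂ : ℝ → ℝ) (hη₁ : ∀ y, η₁ y = s₁ y - y) (hη₂ : ∀ y, η₂ y = s₂ y - y) :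
    (∀ y : ℝ, ρ * |η₁ y - η₂ y| ≤
      (1 / 2) * |ξ₁ (s₁ y) - ξ₂ (s₁ y)| + (1 / 2) * |ξ₁ (s₂ y) - ξ₂ (s₂ y)|) ∧
    ((⨆ y, ENNReal.ofReal |η₁ y - η₂ y|) ≤
      ENNReal.ofReal ρ⁻¹ * ⨆ σ, ENNReal.ofReal |ξ₁ σ - ξ₂ σ|) ∧
    (ρ * Real.sqrt (∫ y, (η₁ y - η₂ y) ^ 2) ≤
      (Real.sqrt (1 + L₁) + Real.sqrt (1 + L₂)) *
        Real.sqrt (∫ σ, (ξ₁ σ - ξ₂ σ) ^ 2)) := by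
  obtain ⟨D₁, hD₁m, hD₁0, hD₁⟩ := aux_goodset hρ hlip₁ hderiv₁ hlow₁
  obtain ⟨D₂, hD₂m, hD₂0, hD₂⟩ := aux_goodset hρ hlip₂ hderiv₂ hlow₂
  have hmono₁ := aux_mono hρ hL₁ hlip₁ hinv₁ hD₁0 hD₁
  have hmono₂ := aux_mono hρ hL₂ hlip₂ hinv₂ hD₂0 hD₂
  have hK₁ := aux_expand hρ hmono₁ hD₁m hD₁0 hD₁
  have hK₂ := aux_expand hρ hmono₂ hD₂m hD₂0 hD₂
  have hη : ∀ y, η₁ y - η₂ y = s₁ y - s₂ y := fun y => by rw [hη₁, hη₂]; ring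
  -- pointwise bounds
  have hpt₁ : ∀ y, ρ * |s₁ y - s₂ y| ≤ |ξ₁ (s₁ y) - ξ₂ (s₁ y)| := by
    intro y
    have h := hK₂ (s₁ y) (s₂ y)
    have heq : (s₁ y + ξ₂ (s₁ y)) - (s₂ y + ξ₂ (s₂ y)) = ξ₂ (s₁ y) - ξ₁ (s₁ y) := by
      linear_combination hinv₁' y - hinv₂' y
    rw [heq] at h
    rw [abs_sub_comm (ξ₁ (s₁ y))]
    exact h
  have hpt₂ : ∀ y, ρ * |s₁ y - s₂ y| ≤ |ξ₁ (s₂ y) - ξ₂ (s₂ y)| := by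
    intro y
    have h := hK₁ (s₁ y) (s₂ y)
    have heq : (s₁ y + ξ₁ (s₁ y)) - (s₂ y + ξ₁ (s₂ y)) = ξ₂ (s₂ y) - ξ₁ (s₂ y) := by
      linear_combination hinv₁' y - hinv₂' y
    rw [heq] at h
    rw [abs_sub_comm (ξ₁ (s₂ y))]
    exact h
  refine ⟨?_, ?_, ?_⟩
  · intro y
    rw [hη]
    linarith [hpt₁ y, hpt₂ y]
  · refine iSup_le fun y => ?_
    have h1 : |η₁ y - η₂ y| ≤ ρ⁻¹ * |ξ₁ (s₁ y) - ξ₂ (s₁ y)| := by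
      rw [hη]
      rw [le_inv_mul_iff₀ hρ]
      exact hpt₁ y
    calc ENNReal.ofReal |η₁ y - η₂ y|
        ≤ ENNReal.ofReal (ρ⁻¹ * |ξ₁ (s₁ y) - ξ₂ (s₁ y)|) := ENNReal.ofReal_le_ofReal h1
      _ = ENNReal.ofReal ρ⁻¹ * ENNReal.ofReal |ξ₁ (s₁ y) - ξ₂ (s₁ y)| :=
          ENNReal.ofReal_mul (inv_nonneg.2 hρ.le)
      _ ≤ ENNReal.ofReal ρ⁻¹ * ⨆ σ, ENNReal.ofReal |ξ₁ σ - ξ₂ σ| :=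
          mul_le_mul_right (le_iSup (fun σ => ENNReal.ofReal |ξ₁ σ - ξ₂ σ|) (s₁ y)) _
  · -- L² estimate
    simp only [hη]
    set A := ∫⁻ y, ENNReal.ofReal ((s₁ y - s₂ y) ^ 2) with hAdef
    set B := ∫⁻ σ, ENNReal.ofReal ((ξ₁ σ - ξ₂ σ) ^ 2) with hBdef
    obtain ⟨hup, hdown⟩ := aux_cov hρ hL₁ hlip₁ hinv₁ hinv₁' hD₁m hD₁0 hD₁
      (fun σ => ENNReal.ofReal ((ξ₁ σ - ξ₂ σ) ^ 2))
    have hM : ENNReal.ofReal (ρ ^ 2) * A ≤ ENNReal.ofReal (1 + L₁) * B := by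
      calc ENNReal.ofReal (ρ ^ 2) * A
          = ∫⁻ y, ENNReal.ofReal (ρ ^ 2) * ENNReal.ofReal ((s₁ y - s₂ y) ^ 2) :=
            (lintegral_const_mul' _ _ ENNReal.ofReal_ne_top).symm
        _ ≤ ∫⁻ y, ENNReal.ofReal ((ξ₁ (s₁ y) - ξ₂ (s₁ y)) ^ 2) := by
            refine lintegral_mono fun y => ?_
            rw [← ENNReal.ofReal_mul (sq_nonneg ρ)]
            refine ENNReal.ofReal_le_ofReal ?_
            nlinarith [hpt₁ y, abs_nonneg (s₁ y - s₂ y), sq_abs (s₁ y - s₂ y),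
              sq_abs (ξ₁ (s₁ y) - ξ₂ (s₁ y)), mul_self_le_mul_self
                (mul_nonneg hρ.le (abs_nonneg (s₁ y - s₂ y))) (hpt₁ y)]
        _ ≤ ENNReal.ofReal (1 + L₁) * B := hup
    have hbd : ∀ y, |ξ₁ (s₁ y) - ξ₂ (s₁ y)| ≤ (1 + L₂) * |s₁ y - s₂ y| := by
      intro y
      have heq : ξ₁ (s₁ y) - ξ₂ (s₁ y) = (s₂ y - s₁ y) + (ξ₂ (s₂ y) - ξ₂ (s₁ y)) := by
        linear_combination hinv₁' y - hinv₂' y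
      calc |ξ₁ (s₁ y) - ξ₂ (s₁ y)| ≤ |s₂ y - s₁ y| + |ξ₂ (s₂ y) - ξ₂ (s₁ y)| := by
            rw [heq]; exact abs_add_le _ _
        _ ≤ |s₂ y - s₁ y| + L₂ * |s₂ y - s₁ y| := by linarith [hlip₂ (s₂ y) (s₁ y)]
        _ = (1 + L₂) * |s₁ y - s₂ y| := by rw [abs_sub_comm]; ring
    have hR : ENNReal.ofReal ρ * B ≤ ENNReal.ofReal ((1 + L₂) ^ 2) * A := by
      calc ENNReal.ofReal ρ * B ≤ ∫⁻ y, ENNReal.ofReal ((ξ₁ (s₁ y) - ξ₂ (s₁ y)) ^ 2) := hdown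
        _ ≤ ∫⁻ y, ENNReal.ofReal ((1 + L₂) ^ 2) * ENNReal.ofReal ((s₁ y - s₂ y) ^ 2) := by
            refine lintegral_mono fun y => ?_
            rw [← ENNReal.ofReal_mul (sq_nonneg _)]
            refine ENNReal.ofReal_le_ofReal ?_
            nlinarith [hbd y, abs_nonneg (ξ₁ (s₁ y) - ξ₂ (s₁ y)), abs_nonneg (s₁ y - s₂ y),
              sq_abs (s₁ y - s₂ y), sq_abs (ξ₁ (s₁ y) - ξ₂ (s₁ y)),
              mul_self_le_mul_self (abs_nonneg (ξ₁ (s₁ y) - ξ₂ (s₁ y))) (hbd y)]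
        _ = ENNReal.ofReal ((1 + L₂) ^ 2) * A :=
            lintegral_const_mul' _ _ ENNReal.ofReal_ne_top
    -- continuity
    have hs₁lip : ∀ a b : ℝ, ρ * |s₁ a - s₁ b| ≤ |a - b| := by
      intro a b
      have h := hK₁ (s₁ a) (s₁ b)
      rwa [hinv₁' a, hinv₁' b] at h
    have hs₂lip : ∀ a b : ℝ, ρ * |s₂ a - s₂ b| ≤ |a - b| := by
      intro a b
      have h := hK₂ (s₂ a) (s₂ b)
      rwa [hinv₂' a, hinv₂' b] at h
    have hs₁cont : Continuous s₁ := by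
      have : LipschitzWith (ρ⁻¹).toNNReal s₁ := by
        apply LipschitzWith.of_dist_le_mul
        intro a b
        rw [Real.dist_eq, Real.dist_eq, Real.coe_toNNReal _ (inv_nonneg.2 hρ.le),
          le_inv_mul_iff₀ hρ]
        exact hs₁lip a b
      exact this.continuous
    have hs₂cont : Continuous s₂ := by
      have : LipschitzWith (ρ⁻¹).toNNReal s₂ := by
        apply LipschitzWith.of_dist_le_mul
        intro a b
        rw [Real.dist_eq, Real.dist_eq, Real.coe_toNNReal _ (inv_nonneg.2 hρ.le),
          le_inv_mul_iff₀ hρ]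
        exact hs₂lip a b
      exact this.continuous
    have hΔcont : Continuous fun y => s₁ y - s₂ y := hs₁cont.sub hs₂cont
    have hgcont : Continuous fun σ => ξ₁ σ - ξ₂ σ :=
      (aux_cont hL₁ hlip₁).sub (aux_cont hL₂ hlip₂)
    have hρ2 : ENNReal.ofReal (ρ ^ 2) ≠ 0 := by
      rw [Ne, ENNReal.ofReal_eq_zero, not_le]
      positivity
    have hρ0 : ENNReal.ofReal ρ ≠ 0 := by
      rw [Ne, ENNReal.ofReal_eq_zero, not_le]
      exact hρ
    rcases eq_or_ne B ⊤ with hB | hB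
    · -- both integrals vanish
      have hA : A = ⊤ := by
        by_contra hA
        rw [hB, ENNReal.mul_top hρ0, top_le_iff] at hR
        exact (ENNReal.mul_ne_top ENNReal.ofReal_ne_top hA) hR
      have hΔnint : ¬ Integrable (fun y => (s₁ y - s₂ y) ^ 2) := by
        intro hint
        have hfin := (hasFiniteIntegral_iff_ofReal
          (Filter.Eventually.of_forall fun y => sq_nonneg _)).1 hint.2
        rw [← hAdef] at hfin
        exact absurd hA (by exact hfin.ne)
      have hgnint : ¬ Integrable (fun σ => (ξ₁ σ - ξ₂ σ) ^ 2) := by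
        intro hint
        have hfin := (hasFiniteIntegral_iff_ofReal
          (Filter.Eventually.of_forall fun σ => sq_nonneg _)).1 hint.2
        rw [← hBdef] at hfin
        exact absurd hB (by exact hfin.ne)
      rw [integral_undef hΔnint, integral_undef hgnint, Real.sqrt_zero, mul_zero, mul_zero]
    · have hA : A ≠ ⊤ := by
        intro hA
        rw [hA, ENNReal.mul_top hρ2, top_le_iff] at hM
        exact (ENNReal.mul_ne_top ENNReal.ofReal_ne_top hB) hM
      have hΔint : Integrable (fun y => (s₁ y - s₂ y) ^ 2) :=
        ⟨(hΔcont.pow 2).aestronglyMeasurable,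
          (hasFiniteIntegral_iff_ofReal
            (Filter.Eventually.of_forall fun y => sq_nonneg _)).2 (lt_top_iff_ne_top.2 hA)⟩
      have ha : ∫ y, (s₁ y - s₂ y) ^ 2 = A.toReal := by
        rw [integral_eq_lintegral_of_nonneg_ae
          (Filter.Eventually.of_forall fun y => sq_nonneg _) (hΔcont.pow 2).aestronglyMeasurable]
      have hb : ∫ σ, (ξ₁ σ - ξ₂ σ) ^ 2 = B.toReal := by
        rw [integral_eq_lintegral_of_nonneg_ae
          (Filter.Eventually.of_forall fun σ => sq_nonneg _) (hgcont.pow 2).aestronglyMeasurable]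
      rw [ha, hb]
      have hMr : ρ ^ 2 * A.toReal ≤ (1 + L₁) * B.toReal := by
        have h := ENNReal.toReal_mono (ENNReal.mul_ne_top ENNReal.ofReal_ne_top hB) hM
        rwa [ENNReal.toReal_mul, ENNReal.toReal_mul, ENNReal.toReal_ofReal (sq_nonneg ρ),
          ENNReal.toReal_ofReal (by linarith : (0:ℝ) ≤ 1 + L₁)] at h
      have h1 : Real.sqrt (ρ ^ 2 * A.toReal) ≤ Real.sqrt ((1 + L₁) * B.toReal) :=
        Real.sqrt_le_sqrt hMr
      rw [Real.sqrt_mul (sq_nonneg ρ), Real.sqrt_sq hρ.le,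
        Real.sqrt_mul (by linarith : (0:ℝ) ≤ 1 + L₁)] at h1
      have h2 : 0 ≤ Real.sqrt (1 + L₂) * Real.sqrt (B.toReal) := by positivity
      nlinarith [h1, h2]
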